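/- Let Λ^± be the free commutative algebra over C(p₀) on generators p_i, i ∈ Z∖{0}, and for each N let φ_N : Λ^± → C[x₁^{±1},…,x_N^{±1}]^{S_N} be the homomorphism with φ_N(p_i) = x₁^i + ⋯ + x_N^i and p₀ ↦ N. If g ∈ Λ^± has coefficients polynomial in p₀ and φ_N(g) = 0 for all positive integers N, then g = 0. -/

import Mathlib

/-- The i-th power sum x₁^i + ⋯ + x_N^i as a Laurent polynomial in N variables. -/
noncomputable def powerSum (N : ℕ) (i : ℤ) : AddMonoidAlgebra ℝ (Fin N → ℤ) :=
  ∑ r : Fin N, AddMonoidAlgebra.single (Pi.single r i) 1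

/-- The homomorphism φ_N : Λ^± → C[x₁^{±1},…,x_N^{±1}] sending the free generator p_i
(i ≠ 0) to the i-th power sum and evaluating p₀ at N. Here Λ^± is modelled as the
polynomial algebra in the p_i, i ∈ ℤ∖{0}, with coefficients polynomial in p₀. -/
noncomputable def phiLaurent (N : ℕ) :
    MvPolynomial {i : ℤ // i ≠ 0} (Polynomial ℝ) → AddMonoidAlgebra ℝ (Fin N → ℤ) :=
  MvPolynomial.eval₂
    ((AddMonoidAlgebra.singleZeroRingHom).comp (Polynomial.evalRingHom (N : ℝ)))
    (fun i => powerSum N i.1)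

private lemma prod_toMultiset_map {σ M : Type*} [CommMonoid M] (f : σ →₀ ℕ) (g : σ → M) :
    (f.toMultiset.map g).prod = f.prod fun i k => g i ^ k := by
  refine f.induction ?_ ?_
  · simp
  · intro a n f ha hn ih
    rw [Finsupp.toMultiset_add, Multiset.map_add, Multiset.prod_add, ih,
      Finsupp.prod_add_index' (fun _ => pow_zero _) (fun _ _ _ => pow_add _ _ _)]
    congr 1
    · rw [Finsupp.toMultiset_single, Multiset.map_nsmul, Multiset.map_singleton,
        Multiset.prod_nsmul, Multiset.prod_singleton]
      exact (Finsupp.prod_single_index (h := fun x k => g x ^ k) (pow_zero (g a))).symm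

private lemma list_prod_get {M : Type*} [CommMonoid M] (l : List ℤ) (g : ℤ → M) :
    (l.map g).prod = ∏ j : Fin l.length, g (l.get j) := by
  induction l with
  | nil => simp
  | cons a t ih =>
    rw [List.map_cons, List.prod_cons, ih]
    exact (Fin.prod_univ_succ fun j : Fin (t.length + 1) => g ((a :: t).get j)).symm

private lemma prod_powerSum (N n : ℕ) (L : Fin n → ℤ) :
    ∏ j, powerSum N (L j) =
      ∑ f : Fin n → Fin N,
        AddMonoidAlgebra.single (∑ j, Pi.single (f j) (L j)) (1 : ℝ) := by
  simp only [powerSum]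
  rw [Finset.prod_univ_sum, Fintype.piFinset_univ]
  refine Finset.sum_congr rfl fun f _ => ?_
  rw [AddMonoidAlgebra.prod_single]
  simp

private lemma sum_single_apply {N n : ℕ} (f : Fin n → Fin N) (c : Fin n → ℤ) (r : Fin N) :
    (∑ j, Pi.single (f j) (c j) : Fin N → ℤ) r = ∑ j, if f j = r then c j else 0 := by
  rw [Finset.sum_apply]
  refine Finset.sum_congr rfl fun j _ => ?_
  rw [Pi.single_apply]
  simp [eq_comm]

private lemma key_multiset {n' n N : ℕ} (hn : n' ≤ n) (L : Fin n' → ℤ) (v : Fin N → ℤ)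
    (hv : (Finset.univ.filter fun r => v r ≠ 0).card = n)
    (f : Fin n' → Fin N) (hf : (∑ j, Pi.single (f j) (L j) : Fin N → ℤ) = v) :
    Multiset.map v (Finset.univ.filter fun r => v r ≠ 0).val
      = Multiset.map L Finset.univ.val := by
  classical
  have hsub : (Finset.univ.filter fun r => v r ≠ 0) ⊆ Finset.univ.image f := by
    intro r hr
    rw [Finset.mem_filter] at hr
    rw [Finset.mem_image]
    by_contra hc
    push_neg at hc
    apply hr.2
    rw [← hf, sum_single_apply]
    exact Finset.sum_eq_zero fun j _ => if_neg (hc j (Finset.mem_univ j))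
  have hcard : (Finset.univ.image f).card = n' := by
    have h1 : (Finset.univ.image f).card ≤ n' := by
      simpa using Finset.card_image_le (s := (Finset.univ : Finset (Fin n'))) (f := f)
    have h2 : n ≤ (Finset.univ.image f).card := hv ▸ Finset.card_le_card hsub
    omega
  have hinj : Function.Injective f := by
    have := Finset.injOn_of_card_image_eq (s := (Finset.univ : Finset (Fin n'))) (f := f)
      (by simpa using hcard)
    rw [Finset.coe_univ] at this
    exact fun a b hab => this (Set.mem_univ a) (Set.mem_univ b) hab
  have heq : (Finset.univ.filter fun r => v r ≠ 0) = Finset.univ.image f :=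
    Finset.eq_of_subset_of_card_le hsub (by omega)
  have hvf : ∀ j, v (f j) = L j := by
    intro j
    rw [← hf, sum_single_apply,
      Finset.sum_eq_single_of_mem j (Finset.mem_univ j)
        (fun j' _ hj' => if_neg (fun hc => hj' (hinj hc))), if_pos rfl]
  rw [heq, Finset.image_val_of_injOn hinj.injOn, Multiset.map_map]
  exact Multiset.map_congr rfl fun j _ => hvf j

/-- if g ∈ Λ^± (with coefficients polynomial in p₀) satisfies
φ_N(g) = 0 for all positive integers N, then g = 0. -/
theorem stmt_19 (g : MvPolynomial {i : ℤ // i ≠ 0} (Polynomial ℝ))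
    (h : ∀ N : ℕ, 0 < N → phiLaurent N g = 0) : g = 0 := by
  classical
  by_contra hg
  have hS : g.support.Nonempty := by
    rw [Finset.nonempty_iff_ne_empty]
    intro hc
    exact hg (MvPolynomial.support_eq_empty.mp hc)
  obtain ⟨m, hmS, hmax⟩ :=
    g.support.exists_max_image (fun m' => Multiset.card (Finsupp.toMultiset m')) hS
  set l : List ℤ := (m.toMultiset.map Subtype.val).toList with hl
  set n : ℕ := l.length with hn
  have hlm : (l : Multiset ℤ) = m.toMultiset.map Subtype.val := Multiset.coe_toList _
  have hl_ne : ∀ x ∈ l, x ≠ 0 := by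
    intro x hx
    have : x ∈ m.toMultiset.map Subtype.val := by rw [← hlm]; exact hx
    obtain ⟨i, _, hi⟩ := Multiset.mem_map.mp this
    rw [← hi]; exact i.2
  have hncard : n = Multiset.card m.toMultiset := by
    rw [hn, hl, Multiset.length_toList, Multiset.card_map]
  have hroot : ∀ N : ℕ, 0 < N → n ≤ N → Polynomial.eval (N : ℝ) (g.coeff m) = 0 := by
    intro N hN1 hN
    set v : Fin N → ℤ := fun r => if h : (r : ℕ) < n then l.get ⟨r, h⟩ else 0 with hv
    have hvlt : ∀ (r : Fin N) (h : (r : ℕ) < n), v r = l.get ⟨r, h⟩ := by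
      intro r h'; rw [hv]; exact dif_pos h'
    have hvge : ∀ (r : Fin N), ¬ (r : ℕ) < n → v r = 0 := by
      intro r h'; rw [hv]; exact dif_neg h'
    have hfilt : (Finset.univ.filter fun r => v r ≠ 0)
        = Finset.univ.image (Fin.castLE hN) := by
      ext r
      simp only [Finset.mem_filter, Finset.mem_univ, true_and, Finset.mem_image]
      constructor
      · intro hr
        by_cases h' : (r : ℕ) < n
        · exact ⟨⟨r, h'⟩, Fin.ext rfl⟩
        · exact absurd (hvge r h') hr
      · rintro ⟨j, rfl⟩
        rw [hvlt _ j.2]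
        exact hl_ne _ (List.get_mem l _)
    have hcardv : (Finset.univ.filter fun r => v r ≠ 0).card = n := by
      rw [hfilt, Finset.card_image_of_injective _ (Fin.castLE_injective hN)]
      simp
    have hmapv : Multiset.map v (Finset.univ.filter fun r => v r ≠ 0).val
        = (l : Multiset ℤ) := by
      rw [hfilt, Finset.image_val_of_injOn (Fin.castLE_injective hN).injOn,
        Multiset.map_map, Fin.univ_val_map]
      have hfn : List.ofFn (v ∘ Fin.castLE hN) = l := by
        conv_rhs => rw [← List.ofFn_get l]
        exact congrArg List.ofFn (funext fun j => hvlt (Fin.castLE hN j) j.2)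
      rw [hfn]
    have hwit : (∑ j : Fin n, Pi.single (Fin.castLE hN j) (l.get j) : Fin N → ℤ) = v := by
      funext r
      rw [sum_single_apply]
      by_cases h' : (r : ℕ) < n
      · have hsum : (∑ j : Fin n, if Fin.castLE hN j = r then l.get j else 0)
            = if Fin.castLE hN (⟨r, h'⟩ : Fin n) = r then l.get ⟨r, h'⟩ else 0 :=
          Finset.sum_eq_single_of_mem (⟨r, h'⟩ : Fin n) (Finset.mem_univ _)
            (fun j' _ hj' => if_neg
              (fun (hc : Fin.castLE hN j' = r) => hj' (Fin.ext (show j'.val = r.val from congrArg Fin.val hc))))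
        rw [hsum, if_pos (show Fin.castLE hN (⟨r, h'⟩ : Fin n) = r from Fin.ext rfl),
          hvlt r h']
      · rw [hvge r h']
        refine Finset.sum_eq_zero fun j _ => if_neg fun hc => ?_
        exact h' (hc ▸ j.2)
    have hphi := h N hN1
    have hco : (phiLaurent N g).coeff v = 0 := by rw [hphi]; rfl
    rw [phiLaurent, MvPolynomial.eval₂_eq] at hco
    have hsz : ∀ c : Polynomial ℝ,
        ((AddMonoidAlgebra.singleZeroRingHom).comp (Polynomial.evalRingHom (N : ℝ))) c
          = AddMonoidAlgebra.single (0 : Fin N → ℤ) (Polynomial.eval (N : ℝ) c) := fun c => rfl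
    have hprod : ∀ m' : {i : ℤ // i ≠ 0} →₀ ℕ,
        (∏ i ∈ m'.support, powerSum N i.1 ^ m' i)
          = ∑ f : Fin (m'.toMultiset.map Subtype.val).toList.length → Fin N,
              AddMonoidAlgebra.single
                (∑ j, Pi.single (f j) ((m'.toMultiset.map Subtype.val).toList.get j)) (1 : ℝ) := by
      intro m'
      have h1 : (∏ i ∈ m'.support, powerSum N i.1 ^ m' i)
          = (m'.toMultiset.map (fun i => powerSum N i.1)).prod := by
        rw [prod_toMultiset_map]; rfl
      have h2 : m'.toMultiset.map (fun i => powerSum N i.1)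
          = Multiset.map (powerSum N) (m'.toMultiset.map Subtype.val) := by
        rw [Multiset.map_map]; rfl
      rw [h1, h2]
      conv_lhs => rw [← Multiset.coe_toList (m'.toMultiset.map Subtype.val),
        Multiset.map_coe, Multiset.prod_coe]
      rw [list_prod_get]
      exact prod_powerSum N _ _
    simp only [hprod, hsz] at hco
    rw [AddMonoidAlgebra.coeff_sum, Finsupp.finset_sum_apply] at hco
    have hterm : ∀ m' ∈ g.support, m' ≠ m →
        ((AddMonoidAlgebra.single (0 : Fin N → ℤ) (Polynomial.eval (N : ℝ) (g.coeff m')) *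
          (∑ f : Fin (m'.toMultiset.map Subtype.val).toList.length → Fin N,
            AddMonoidAlgebra.single
              (∑ j, Pi.single (f j) ((m'.toMultiset.map Subtype.val).toList.get j)) (1 : ℝ)
           : AddMonoidAlgebra ℝ (Fin N → ℤ))).coeff v) = 0 := by
      intro m' hm' hne
      rw [AddMonoidAlgebra.coeff_single_zero_mul, AddMonoidAlgebra.coeff_sum, Finsupp.finset_sum_apply]
      have hzero : ∀ f : Fin (m'.toMultiset.map Subtype.val).toList.length → Fin N,
          (AddMonoidAlgebra.single
            (∑ j, Pi.single (f j) ((m'.toMultiset.map Subtype.val).toList.get j)) (1 : ℝ)).coeff v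
            = 0 := by
        intro f
        rw [AddMonoidAlgebra.coeff_single, Finsupp.single_apply, if_neg]
        intro hc
        apply hne
        have hlen : (m'.toMultiset.map Subtype.val).toList.length ≤ n := by
          rw [Multiset.length_toList, Multiset.card_map, hncard]
          exact hmax m' hm'
        have hk := key_multiset hlen _ v hcardv f hc
        rw [hmapv, Fin.univ_val_map, List.ofFn_get] at hk
        have hml : m'.toMultiset.map Subtype.val = m.toMultiset.map Subtype.val := by
          rw [← Multiset.coe_toList (m'.toMultiset.map Subtype.val), ← hk, hlm]
        have h3 := Multiset.map_injective Subtype.val_injective hml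
        have h4 := congrArg Multiset.toFinsupp h3
        simpa using h4
      rw [Finset.sum_eq_zero fun f _ => hzero f, mul_zero]
    rw [Finset.sum_eq_single_of_mem m hmS (fun m' hm' hne => hterm m' hm' hne)] at hco
    rw [AddMonoidAlgebra.coeff_single_zero_mul, AddMonoidAlgebra.coeff_sum, Finsupp.finset_sum_apply] at hco
    have hcnt : (∑ f : Fin (m.toMultiset.map Subtype.val).toList.length → Fin N,
        (AddMonoidAlgebra.single
          (∑ j, Pi.single (f j) ((m.toMultiset.map Subtype.val).toList.get j)) (1 : ℝ)).coeff v) ≠ 0 := by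
      have hpos : ∀ f : Fin (m.toMultiset.map Subtype.val).toList.length → Fin N,
          0 ≤ (AddMonoidAlgebra.single
            (∑ j, Pi.single (f j) ((m.toMultiset.map Subtype.val).toList.get j)) (1 : ℝ)).coeff v := by
        intro f
        rw [AddMonoidAlgebra.coeff_single, Finsupp.single_apply]
        split <;> norm_num
      intro hc
      have hz := (Finset.sum_eq_zero_iff_of_nonneg fun f _ => hpos f).mp hc
        (Fin.castLE hN) (Finset.mem_univ _)
      rw [AddMonoidAlgebra.coeff_single, Finsupp.single_apply, if_pos hwit] at hz
      exact one_ne_zero hz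
    exact (mul_eq_zero.mp hco).resolve_right hcnt
  have hcm : g.coeff m = 0 := by
    apply Polynomial.eq_zero_of_infinite_isRoot
    apply Set.infinite_of_injective_forall_mem
      (f := fun k : ℕ => ((n + 1 + k : ℕ) : ℝ))
    · intro a b hab
      have := Nat.cast_injective (R := ℝ) hab
      omega
    · intro k
      exact hroot (n + 1 + k) (by omega) (by omega)
  exact (MvPolynomial.mem_support_iff.mp hmS) hcm
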